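/- Let S = {s₁,…,s_n} ⊆ ℕ^k, t = (t¹,…,t^k) ∈ ℕ^k, d ≥ 1, and let t_max = max_i tⁱ. Define S_eq ⊆ ℕ^{k+1} by appending t_max as a (k+1)-th coordinate to each vector of S, and adding one extra vector b = (d·t_max − t¹, …, d·t_max − t^k, 0); let t_eq = (d·t_max, …, d·t_max) ∈ ℕ^{k+1} (assume d·t_max ≥ tⁱ for all i so b ∈ ℕ^{k+1}). Then there exists S' ⊆ S with |S'| ≥ d and Σ_{s∈S'} s ≤ t if and only if there exists S'_eq ⊆ S_eq with |S'_eq| ≥ d + 1 and Σ_{s∈S'_eq} s ≤ t_eq. -/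

import Mathlib

/-- making the target of Dual Multidimensional Subset Sum
uniform.  `seq` indexes the vectors of `S_eq`: `seq (some i)` is `s i` with
`t_max` appended, and `seq none` is the extra vector
`b = (d·t_max − t¹, …, d·t_max − t^k, 0)`. -/
theorem stmt11 {n k : ℕ} (s : Fin n → Fin k → ℕ) (t : Fin k → ℕ) (d : ℕ)
    (hd : 1 ≤ d)
    (tmax : ℕ) (htmax : tmax = Finset.univ.sup t)
    (seq : Option (Fin n) → Fin (k + 1) → ℕ)
    (hsome : ∀ i : Fin n, seq (some i) = Fin.snoc (s i) tmax)
    (hnone : seq none = Fin.snoc (fun j => d * tmax - t j) 0) :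
    (∃ S' : Finset (Fin n), d ≤ S'.card ∧ ∀ j : Fin k, (∑ i ∈ S', s i) j ≤ t j) ↔
      (∃ Seq : Finset (Option (Fin n)), d + 1 ≤ Seq.card ∧
        ∀ j : Fin (k + 1), (∑ i ∈ Seq, seq i) j ≤ d * tmax) := by
  have ht_le : ∀ j : Fin k, t j ≤ tmax := by
    intro j; rw [htmax]; exact Finset.le_sup (Finset.mem_univ j)
  have ht_le' : ∀ j : Fin k, t j ≤ d * tmax := fun j =>
    (ht_le j).trans (le_mul_of_one_le_left (Nat.zero_le _) hd)
  constructor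
  · rintro ⟨S', hcard, hsum⟩
    obtain ⟨T, hTsub, hTcard⟩ := Finset.exists_subset_card_eq hcard
    refine ⟨insert none (T.image some), ?_, ?_⟩
    · rw [Finset.card_insert_of_notMem (by simp),
        Finset.card_image_of_injective _ (Option.some_injective _), hTcard]
    · intro j
      rw [Finset.sum_apply, Finset.sum_insert (by simp),
        Finset.sum_image (fun a _ b _ h => Option.some_injective _ h)]
      induction j using Fin.lastCases with
      | last =>
        simp only [hnone, hsome, Fin.snoc_last]
        rw [Finset.sum_const, hTcard, smul_eq_mul]
        omega
      | cast j =>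
        simp only [hnone, hsome, Fin.snoc_castSucc]
        have h1 : ∑ i ∈ T, s i j ≤ t j := by
          calc ∑ i ∈ T, s i j ≤ ∑ i ∈ S', s i j :=
                Finset.sum_le_sum_of_subset hTsub
            _ ≤ t j := by have := hsum j; rwa [Finset.sum_apply] at this
        have := ht_le' j
        omega
  · rintro ⟨Seq, hcard, hsum⟩
    set S' : Finset (Fin n) := Finset.univ.filter (fun i => some i ∈ Seq) with hS'
    have himg : S'.image some = Seq.erase none := by
      ext a
      cases a with
      | none => simp [hS']
      | some i => simp [hS']
    have hcardS' : d ≤ S'.card := by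
      have h1 : Seq.card - 1 ≤ (Seq.erase none).card := Finset.pred_card_le_card_erase
      have h2 : S'.card = (Seq.erase none).card := by
        rw [← himg, Finset.card_image_of_injective _ (Option.some_injective _)]
      omega
    refine ⟨S', hcardS', ?_⟩
    intro j
    rw [Finset.sum_apply]
    have herase : ∑ i ∈ S', s i j = ∑ a ∈ Seq.erase none, seq a j.castSucc := by
      rw [← himg, Finset.sum_image (fun a _ b _ h => Option.some_injective _ h)]
      exact Finset.sum_congr rfl (fun i _ => by rw [hsome, Fin.snoc_castSucc])
    by_cases hmem : none ∈ Seq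
    · have hsplit : ∑ a ∈ Seq, seq a j.castSucc
          = seq none j.castSucc + ∑ a ∈ Seq.erase none, seq a j.castSucc :=
        (Finset.add_sum_erase _ _ hmem).symm
      have := hsum j.castSucc
      rw [Finset.sum_apply, hsplit, hnone, Fin.snoc_castSucc] at this
      have h1 := ht_le' j
      omega
    · have heq : Seq.erase none = Seq := Finset.erase_eq_of_notMem hmem
      -- last coordinate forces tmax = 0
      have hlast := hsum (Fin.last k)
      rw [Finset.sum_apply] at hlast
      have hconst : ∑ a ∈ Seq, seq a (Fin.last k) = Seq.card * tmax := by
        rw [Finset.sum_congr rfl (fun a ha => ?_), Finset.sum_const, smul_eq_mul]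
        cases a with
        | none => exact absurd ha hmem
        | some i => rw [hsome, Fin.snoc_last]
      rw [hconst] at hlast
      have htmax0 : tmax = 0 := by nlinarith
      have := hsum j.castSucc
      rw [Finset.sum_apply, htmax0, mul_zero] at this
      rw [herase, heq]
      have h1 := ht_le j
      omega
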